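/- For every forest F (a finite simple graph with no cycles), the minimum cardinality of an odd cover of F equals the maximum size of a matching in F; that is, b₂(F) = m(F). -/

import Mathlib

open scoped Classical

/-- A list of bicliques `B 0, …, B (k-1)` (each given by a pair of disjoint
vertex subsets) is an *odd cover* of `G` if two distinct vertices are adjacent
in `G` exactly when they lie in opposite parts of an odd number of the bicliques. -/
def IsOddCover {V : Type*} [Fintype V] (G : SimpleGraph V) {k : ℕ}
    (B : Fin k → Finset V × Finset V) : Prop :=
  (∀ i, Disjoint (B i).1 (B i).2) ∧
  ∀ u v : V, u ≠ v →
    (G.Adj u v ↔ Odd (Finset.univ.filter (fun i : Fin k =>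
      (u ∈ (B i).1 ∧ v ∈ (B i).2) ∨ (u ∈ (B i).2 ∧ v ∈ (B i).1))).card)

/-- `b2 G` is the minimum cardinality of an odd cover of `G`. -/
noncomputable def b2 {V : Type*} [Fintype V] (G : SimpleGraph V) : ℕ :=
  sInf {k : ℕ | ∃ B : Fin k → Finset V × Finset V, IsOddCover G B}

/-- `r2 G` is the rank of the adjacency matrix of `G` over `𝔽₂`. -/
noncomputable def r2 {V : Type*} [Fintype V] (G : SimpleGraph V) : ℕ :=
  (Matrix.of fun u v : V => if G.Adj u v then (1 : ZMod 2) else 0).rank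


/-- The maximum size of a matching in `G`. -/
noncomputable def maxMatchingSize {V : Type*} [Fintype V] (G : SimpleGraph V) : ℕ :=
  sSup {n : ℕ | ∃ M : G.Subgraph, M.IsMatching ∧ M.edgeSet.ncard = n}


/-! ### Auxiliary lemmas -/

open SimpleGraph

open SimpleGraph in
lemma exists_leaf {V : Type*} [Fintype V] (G : SimpleGraph V) (hG : G.IsAcyclic)
    {a b : V} (hab : G.Adj a b) :
    ∃ u v, G.Adj u v ∧ ∀ w, G.Adj u w → w = v := by
  classical
  set S : Set ℕ := {n | ∃ (u v : V) (p : G.Walk u v), p.IsPath ∧ p.length = n} with hS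
  have h1S : 1 ∈ S := ⟨a, b, Walk.cons hab Walk.nil, by simp [hab.ne], by simp⟩
  have hne : S.Nonempty := ⟨1, h1S⟩
  have hbdd : BddAbove S := by
    refine ⟨Fintype.card V, ?_⟩
    rintro n ⟨u, v, p, hp, rfl⟩
    exact le_of_lt hp.length_lt
  obtain ⟨u, v, p, hp, hlen⟩ := Nat.sSup_mem hne hbdd
  have h1 : 1 ≤ sSup S := le_csSup hbdd h1S
  cases p with
  | nil => simp at hlen; omega
  | @cons _ c _ h q =>
    refine ⟨u, c, h, fun w hw => ?_⟩
    by_contra hne'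
    rw [Walk.cons_isPath_iff] at hp
    by_cases hws : w ∈ (Walk.cons h q).support
    · have hwu : w ≠ u := fun hh => G.irrefl (hh ▸ hw)
      have hwq : w ∈ q.support := by
        have hws2 := hws
        rw [Walk.support_cons] at hws2
        rcases List.mem_cons.mp hws2 with h' | h'
        · exact absurd h' hwu
        · exact h'
      set q' := q.takeUntil w hwq with hq'def
      have hq' : q'.IsPath := hp.1.takeUntil hwq
      have husup : u ∉ q'.support := fun hus => hp.2 (Walk.support_takeUntil_subset _ hwq hus)
      have hcp : (Walk.cons h q').IsPath := hq'.cons husup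
      have hcyc : (Walk.cons hw ((Walk.cons h q').reverse)).IsCycle := by
        rw [Walk.cons_isCycle_iff]
        refine ⟨hcp.reverse, ?_⟩
        rw [Walk.edges_reverse, List.mem_reverse]
        intro hmem
        rw [Walk.edges_cons] at hmem
        rcases List.mem_cons.mp hmem with h1' | h2'
        · rw [Sym2.eq_iff] at h1'
          rcases h1' with ⟨-, rfl⟩ | ⟨h3, h4⟩
          · exact hne' rfl
          · exact G.irrefl (h3 ▸ h4 ▸ hw)
        · exact husup (q'.fst_mem_support_of_mem_edges h2')
      exact hG _ hcyc
    · have hp' : (Walk.cons hw.symm (Walk.cons h q)).IsPath := by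
        rw [Walk.cons_isPath_iff]
        exact ⟨by rw [Walk.cons_isPath_iff]; exact hp, hws⟩
      have hmem2 : (Walk.cons hw.symm (Walk.cons h q)).length ∈ S := ⟨w, v, _, hp', rfl⟩
      have hle2 := le_csSup hbdd hmem2
      rw [Walk.length_cons, hlen] at hle2
      omega


lemma matching_uniq {V : Type*} {G : SimpleGraph V} {M : G.Subgraph} (hM : M.IsMatching)
    {a b c : V} (h1 : M.Adj a b) (h2 : M.Adj a c) : b = c := by
  obtain ⟨d, -, hd⟩ := hM (M.edge_vert h1)
  rw [hd b h1, hd c h2]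

lemma matching_delete {V : Type*} {G : SimpleGraph V} {M : G.Subgraph} (hM : M.IsMatching)
    {v w : V} (hvw : M.Adj v w) :
    (M.deleteVerts {v, w}).IsMatching ∧
    (M.deleteVerts {v, w}).verts = M.verts \ {v, w} ∧
    (M.deleteVerts {v, w}).edgeSet = M.edgeSet \ {s(v, w)} := by
  have hne : v ≠ w := (M.adj_sub hvw).ne
  refine ⟨?_, M.deleteVerts_verts, ?_⟩
  · intro x hx
    rw [Subgraph.deleteVerts_verts, Set.mem_diff] at hx
    obtain ⟨hx1, hx2⟩ := hx
    obtain ⟨y, hy, hyu⟩ := hM hx1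
    have hxv : x ≠ v := fun hh => hx2 (by simp [hh])
    have hxw : x ≠ w := fun hh => hx2 (by simp [hh])
    have hyv : y ≠ v := by
      rintro rfl
      exact hxw (matching_uniq hM hy.symm hvw)
    have hyw : y ≠ w := by
      rintro rfl
      exact hxv (matching_uniq hM hy.symm hvw.symm)
    refine ⟨y, Subgraph.deleteVerts_adj.mpr
      ⟨hx1, by simp [hxv, hxw], M.edge_vert hy.symm, by simp [hyv, hyw], hy⟩,
      fun y' hy' => hyu y' (Subgraph.deleteVerts_adj.mp hy').2.2.2.2⟩
  · ext e
    induction e with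
    | _ x y =>
      simp only [Subgraph.mem_edgeSet, Set.mem_diff, Set.mem_singleton_iff,
        Subgraph.deleteVerts_adj]
      constructor
      · rintro ⟨hx1, hx2, hy1, hy2, hadj⟩
        refine ⟨hadj, fun hh => ?_⟩
        rw [Sym2.eq_iff] at hh
        rcases hh with ⟨rfl, rfl⟩ | ⟨rfl, rfl⟩
        · simp at hx2
        · simp at hy2
      · rintro ⟨hadj, hee⟩
        have hxv : x ≠ v := by
          rintro rfl
          exact hee (by rw [matching_uniq hM hadj hvw])
        have hxw : x ≠ w := by
          rintro rfl
          have h1 : y = v := matching_uniq hM hadj hvw.symm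
          subst h1
          exact hee (Sym2.eq_swap)
        have hyv : y ≠ v := by
          rintro rfl
          have h1 : x = w := matching_uniq hM hadj.symm hvw
          subst h1
          exact hee (Sym2.eq_swap)
        have hyw : y ≠ w := by
          rintro rfl
          exact hee (by rw [matching_uniq hM hadj.symm hvw.symm])
        exact ⟨M.edge_vert hadj, by simp [hxv, hxw], M.edge_vert hadj.symm,
          by simp [hyv, hyw], hadj⟩

lemma matching_card_aux {V : Type*} [Fintype V] {G : SimpleGraph V} :
    ∀ (n : ℕ) (M : G.Subgraph), M.IsMatching → M.verts.ncard = n →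
      n = 2 * M.edgeSet.ncard := by
  intro n
  induction n using Nat.strong_induction_on with
  | _ n ih =>
    intro M hM hn
    rcases Set.eq_empty_or_nonempty M.verts with he | ⟨v, hv⟩
    · have : M.edgeSet = ∅ := by
        ext e
        induction e with
        | _ x y =>
          simp only [Subgraph.mem_edgeSet, Set.mem_empty_iff_false, iff_false]
          intro h
          exact absurd (M.edge_vert h) (by simp [he])
      simp [← hn, he, this]
    · obtain ⟨w, hw, -⟩ := hM hv
      have hvw : v ≠ w := (M.adj_sub hw).ne
      have hwv : w ∈ M.verts := M.edge_vert hw.symm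
      obtain ⟨hM', hverts', hedges'⟩ := matching_delete hM hw
      have hsub : {v, w} ⊆ M.verts := by
        rintro x (rfl | rfl)
        exacts [hv, hwv]
      have hcard2 : ({v, w} : Set V).ncard = 2 := by
        rw [Set.ncard_pair hvw]
      have hvertscard : (M.deleteVerts {v, w}).verts.ncard = n - 2 := by
        rw [hverts', Set.ncard_diff hsub (Set.toFinite _), hcard2, hn]
      have hn2 : 2 ≤ n := by
        rw [← hn, ← hcard2]
        exact Set.ncard_le_ncard hsub (Set.toFinite _)
      have hmem : s(v, w) ∈ M.edgeSet := hw
      have hE1 : 1 ≤ M.edgeSet.ncard :=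
        (Set.ncard_pos (Set.toFinite _)).mpr ⟨_, hmem⟩
      have hEcard : (M.deleteVerts {v, w}).edgeSet.ncard = M.edgeSet.ncard - 1 := by
        rw [hedges', Set.ncard_diff_singleton_of_mem hmem]
      have := ih (n - 2) (by omega) _ hM' hvertscard
      omega

lemma matching_card {V : Type*} [Fintype V] {G : SimpleGraph V} {M : G.Subgraph}
    (hM : M.IsMatching) : M.verts.ncard = 2 * M.edgeSet.ncard :=
  matching_card_aux _ M hM rfl


noncomputable def advec {V : Type*} (G : SimpleGraph V) : V → V → ZMod 2 :=
  fun u v => if G.Adj u v then 1 else 0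

lemma cast_eq_one_iff_odd (c : ℕ) : (c : ZMod 2) = 1 ↔ Odd c := by
  rw [Nat.odd_iff, ← ZMod.natCast_mod c 2]
  rcases Nat.mod_two_eq_zero_or_one c with h | h <;> rw [h] <;> decide

lemma cover_identity {V : Type*} [Fintype V] {G : SimpleGraph V} {k : ℕ}
    {B : Fin k → Finset V × Finset V} (hB : IsOddCover G B) (u v : V) :
    advec G u v = ∑ i : Fin k,
      ((if u ∈ (B i).1 then (1 : ZMod 2) else 0) * (if v ∈ (B i).2 then 1 else 0)
        + (if u ∈ (B i).2 then (1 : ZMod 2) else 0) * (if v ∈ (B i).1 then 1 else 0)) := by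
  rcases eq_or_ne u v with rfl | huv
  · rw [advec, if_neg (G.irrefl)]
    rw [eq_comm, Finset.sum_eq_zero]
    intro i _
    by_cases h1 : u ∈ (B i).1 <;> by_cases h2 : u ∈ (B i).2 <;> simp [h1, h2]
    decide
  · have hcount : ((Finset.univ.filter (fun i : Fin k =>
        (u ∈ (B i).1 ∧ v ∈ (B i).2) ∨ (u ∈ (B i).2 ∧ v ∈ (B i).1))).card : ZMod 2)
        = ∑ i : Fin k,
          ((if u ∈ (B i).1 then (1 : ZMod 2) else 0) * (if v ∈ (B i).2 then 1 else 0)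
            + (if u ∈ (B i).2 then (1 : ZMod 2) else 0) * (if v ∈ (B i).1 then 1 else 0)) := by
      rw [Finset.card_filter, Nat.cast_sum]
      refine Finset.sum_congr rfl fun i _ => ?_
      have hd1 : ¬(u ∈ (B i).1 ∧ u ∈ (B i).2) :=
        fun ⟨ha, hb⟩ => Finset.disjoint_left.mp (hB.1 i) ha hb
      have hd2 : ¬(v ∈ (B i).1 ∧ v ∈ (B i).2) :=
        fun ⟨ha, hb⟩ => Finset.disjoint_left.mp (hB.1 i) ha hb
      by_cases h1 : u ∈ (B i).1 <;> by_cases h2 : u ∈ (B i).2 <;>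
        by_cases h3 : v ∈ (B i).1 <;> by_cases h4 : v ∈ (B i).2 <;>
        simp_all
    rw [← hcount, advec]
    by_cases hadj : G.Adj u v
    · rw [if_pos hadj, eq_comm, cast_eq_one_iff_odd]
      exact (hB.2 u v huv).mp hadj
    · rw [if_neg hadj]
      have hno : ¬ Odd ((Finset.univ.filter (fun i : Fin k =>
          (u ∈ (B i).1 ∧ v ∈ (B i).2) ∨ (u ∈ (B i).2 ∧ v ∈ (B i).1))).card) :=
        fun ho => hadj ((hB.2 u v huv).mpr ho)
      obtain ⟨m, hm⟩ := Nat.not_odd_iff_even.mp hno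
      rw [hm]
      push_cast
      exact (CharTwo.add_self_eq_zero _).symm


lemma nd {V : Type*} [Fintype V] (F : SimpleGraph V) (hF : F.IsAcyclic) :
    ∀ (n : ℕ) (T : Finset V), T.card = n →
    (∃ M : F.Subgraph, M.IsMatching ∧ M.verts = ↑T) →
    ∀ z : V → ZMod 2, (∀ x, x ∉ T → z x = 0) →
    (∀ w ∈ T, ∑ x ∈ T, z x * advec F x w = 0) → ∀ x, z x = 0 := by
  intro n
  induction n using Nat.strong_induction_on with
  | _ n ih =>
    intro T hTcard ⟨M, hM, hMverts⟩ z hsupp hsums x0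
    rcases Finset.eq_empty_or_nonempty T with rfl | ⟨v0, hv0⟩
    · exact hsupp x0 (Finset.notMem_empty x0)
    -- the induced graph on T
    · set GS : SimpleGraph V := {
        Adj := fun x y => F.Adj x y ∧ x ∈ T ∧ y ∈ T
        symm := ⟨fun x y ⟨h1, h2, h3⟩ => ⟨h1.symm, h3, h2⟩⟩
        loopless := ⟨fun x h => F.irrefl h.1⟩ } with hGS
      have hGSle : GS ≤ F := fun x y h => h.1
      have hGSacyclic : GS.IsAcyclic := fun w c hc => hF (c.mapLe hGSle) (hc.mapLe hGSle)
      have hv0M : v0 ∈ M.verts := by rw [hMverts]; exact_mod_cast hv0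
      obtain ⟨w0, hw0, -⟩ := hM hv0M
      have hw0T : w0 ∈ T := by
        have : w0 ∈ M.verts := M.edge_vert hw0.symm
        rw [hMverts] at this; exact_mod_cast this
      have hGSedge : GS.Adj v0 w0 := ⟨M.adj_sub hw0, hv0, hw0T⟩
      obtain ⟨u, c, huc, hleaf⟩ := exists_leaf GS hGSacyclic hGSedge
      have huT : u ∈ T := huc.2.1
      have hcT : c ∈ T := huc.2.2
      have hucne : u ≠ c := huc.1.ne
      have hucF : F.Adj u c := huc.1
      -- u is matched to c in M
      have huM : u ∈ M.verts := by rw [hMverts]; exact_mod_cast huT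
      obtain ⟨p, hp, -⟩ := hM huM
      have hpT : p ∈ T := by
        have : p ∈ M.verts := M.edge_vert hp.symm
        rw [hMverts] at this; exact_mod_cast this
      have hpc : p = c := hleaf p ⟨M.adj_sub hp, huT, hpT⟩
      have hMuc : M.Adj u c := hpc ▸ hp
      -- z c = 0
      have hzc : z c = 0 := by
        have h0 := hsums u huT
        rw [Finset.sum_eq_single c] at h0
        · rw [advec, if_pos hucF.symm, mul_one] at h0
          exact h0
        · intro b hb hbc
          have : advec F b u = 0 := by
            rw [advec, if_neg]
            intro hadj
            exact hbc (hleaf b ⟨hadj.symm, huT, hb⟩)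
          rw [this, mul_zero]
        · intro h; exact absurd hcT h
      -- the smaller instance
      set T' : Finset V := T \ {u, c} with hT'
      have hT'sub : ∀ {x}, x ∈ T' → x ∈ T := fun hx => (Finset.mem_sdiff.mp hx).1
      have huT' : u ∉ T' := fun h => (Finset.mem_sdiff.mp h).2 (by simp)
      have hcT' : c ∉ T' := fun h => (Finset.mem_sdiff.mp h).2 (by simp)
      obtain ⟨hM', hMv', -⟩ := matching_delete hM hMuc
      have hMverts' : (M.deleteVerts {u, c}).verts = ↑T' := by
        rw [hMv', hMverts, hT']
        push_cast
        rfl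
      have hsubT : {u, c} ⊆ T := by
        intro x hx
        rcases Finset.mem_insert.mp hx with rfl | hx
        · exact huT
        · rw [Finset.mem_singleton.mp hx]; exact hcT
      have hT'card : T'.card = n - 2 := by
        rw [hT', Finset.card_sdiff_of_subset hsubT, Finset.card_pair hucne, hTcard]
      have hn2 : 2 ≤ n := by
        rw [← hTcard, ← Finset.card_pair hucne]
        exact Finset.card_le_card hsubT
      set z' : V → ZMod 2 := fun x => if x = u then 0 else z x with hz'def
      have hsupp' : ∀ x, x ∉ T' → z' x = 0 := by
        intro x hx
        rcases eq_or_ne x u with rfl | hxu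
        · simp [hz'def]
        · rw [hz'def]
          simp only [if_neg hxu]
          rcases eq_or_ne x c with rfl | hxc
          · exact hzc
          · refine hsupp x fun hxT => hx ?_
            rw [hT', Finset.mem_sdiff]
            exact ⟨hxT, by simp [hxu, hxc]⟩
      have hTsplit : T = insert u (insert c T') := by
        ext y
        simp only [Finset.mem_insert, hT', Finset.mem_sdiff, Finset.mem_insert,
          Finset.mem_singleton]
        constructor
        · intro hy
          rcases eq_or_ne y u with rfl | h1
          · exact Or.inl rfl
          · rcases eq_or_ne y c with rfl | h2
            · exact Or.inr (Or.inl rfl)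
            · exact Or.inr (Or.inr ⟨hy, by tauto⟩)
        · rintro (rfl | rfl | ⟨hy, -⟩)
          exacts [huT, hcT, hy]
      have hcT'' : c ∉ insert c T' → False := by simp
      have hsums' : ∀ w ∈ T', ∑ x ∈ T', z' x * advec F x w = 0 := by
        intro w hw
        have hwT : w ∈ T := hT'sub hw
        have hwu : w ≠ u := fun h => huT' (h ▸ hw)
        have hwc : w ≠ c := fun h => hcT' (h ▸ hw)
        have hauw : advec F u w = 0 := by
          rw [advec, if_neg]
          intro hadj
          exact hwc (hleaf w ⟨hadj, huT, hwT⟩)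
        have h0 := hsums w hwT
        rw [hTsplit, Finset.sum_insert (by simp [huT', hucne]),
          Finset.sum_insert hcT'] at h0
        rw [hzc, zero_mul, zero_add, hauw, mul_zero, zero_add] at h0
        rw [← h0]
        refine Finset.sum_congr rfl fun x hx => ?_
        have hxu : x ≠ u := fun h => huT' (h ▸ hx)
        rw [hz'def]
        simp [hxu]
      have hz' := ih (n - 2) (by omega) T' hT'card ⟨_, hM', hMverts'⟩ z' hsupp' hsums'
      have hzx : ∀ x, x ≠ u → z x = 0 := by
        intro x hxu
        simpa [hz'def, hxu] using hz' x
      have hzu : z u = 0 := by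
        have h0 := hsums c hcT
        rw [Finset.sum_eq_single u] at h0
        · rw [advec, if_pos hucF, mul_one] at h0
          exact h0
        · intro b hb hbu
          rw [hzx b hbu, zero_mul]
        · intro h; exact absurd huT h
      rcases eq_or_ne x0 u with rfl | h
      · exact hzu
      · exact hzx x0 h


lemma lower_bound {V : Type*} [Fintype V] {F : SimpleGraph V} (hF : F.IsAcyclic) {k : ℕ}
    {B : Fin k → Finset V × Finset V} (hB : IsOddCover F B)
    {M : F.Subgraph} (hM : M.IsMatching) : M.edgeSet.ncard ≤ k := by
  by_contra hlt
  push_neg at hlt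
  have hfin : M.verts.Finite := Set.toFinite _
  set T : Finset V := hfin.toFinset with hT
  have hTcoe : (↑T : Set V) = M.verts := hfin.coe_toFinset
  have hTcard : T.card = 2 * M.edgeSet.ncard := by
    rw [← Set.ncard_eq_toFinset_card _ hfin, matching_card hM]
  set θ : (↥T → ZMod 2) → ((Fin k → ZMod 2) × (Fin k → ZMod 2)) := fun f =>
    (fun i => ∑ x ∈ T.attach, f x * (if ↑x ∈ (B i).1 then 1 else 0),
     fun i => ∑ x ∈ T.attach, f x * (if ↑x ∈ (B i).2 then 1 else 0)) with hθdef
  have hcards : Fintype.card ((Fin k → ZMod 2) × (Fin k → ZMod 2))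
      < Fintype.card (↥T → ZMod 2) := by
    rw [Fintype.card_prod, Fintype.card_fun, Fintype.card_fun,
      Fintype.card_coe, Fintype.card_fin, ZMod.card]
    rw [hTcard, ← pow_add]
    exact Nat.pow_lt_pow_right (by norm_num) (by omega)
  obtain ⟨f, g, hfg, hθ⟩ := Fintype.exists_ne_map_eq_of_card_lt θ hcards
  set z : V → ZMod 2 := fun v => if h : v ∈ T then f ⟨v, h⟩ + g ⟨v, h⟩ else 0 with hzdef
  have hsupp : ∀ x, x ∉ T → z x = 0 := fun x hx => by simp [hzdef, hx]
  obtain ⟨x, hx⟩ := Function.ne_iff.mp hfg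
  have hadd : ∀ a b : ZMod 2, a + b = 0 → a = b := by decide
  have hznz : z ↑x ≠ 0 := by
    rw [hzdef]
    simp only [x.2, dif_pos]
    intro h
    exact hx (hadd _ _ h)
  have horth1 : ∀ i, ∑ v ∈ T, z v * (if v ∈ (B i).1 then (1 : ZMod 2) else 0) = 0 := by
    intro i
    rw [← Finset.sum_attach T (fun v => z v * (if v ∈ (B i).1 then (1 : ZMod 2) else 0))]
    have : ∀ x : ↥T, z ↑x = f x + g x := fun x => by simp [hzdef, x.2]
    calc ∑ x ∈ T.attach, z ↑x * (if ↑x ∈ (B i).1 then (1 : ZMod 2) else 0)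
        = (∑ x ∈ T.attach, f x * (if ↑x ∈ (B i).1 then (1 : ZMod 2) else 0))
          + ∑ x ∈ T.attach, g x * (if ↑x ∈ (B i).1 then (1 : ZMod 2) else 0) := by
          rw [← Finset.sum_add_distrib]
          exact Finset.sum_congr rfl fun x _ => by rw [this x]; ring
      _ = (θ f).1 i + (θ g).1 i := rfl
      _ = 0 := by rw [hθ]; exact CharTwo.add_self_eq_zero _
  have horth2 : ∀ i, ∑ v ∈ T, z v * (if v ∈ (B i).2 then (1 : ZMod 2) else 0) = 0 := by
    intro i
    rw [← Finset.sum_attach T (fun v => z v * (if v ∈ (B i).2 then (1 : ZMod 2) else 0))]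
    have : ∀ x : ↥T, z ↑x = f x + g x := fun x => by simp [hzdef, x.2]
    calc ∑ x ∈ T.attach, z ↑x * (if ↑x ∈ (B i).2 then (1 : ZMod 2) else 0)
        = (∑ x ∈ T.attach, f x * (if ↑x ∈ (B i).2 then (1 : ZMod 2) else 0))
          + ∑ x ∈ T.attach, g x * (if ↑x ∈ (B i).2 then (1 : ZMod 2) else 0) := by
          rw [← Finset.sum_add_distrib]
          exact Finset.sum_congr rfl fun x _ => by rw [this x]; ring
      _ = (θ f).2 i + (θ g).2 i := rfl
      _ = 0 := by rw [hθ]; exact CharTwo.add_self_eq_zero _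
  have hsums : ∀ w ∈ T, ∑ v ∈ T, z v * advec F v w = 0 := by
    intro w _
    calc ∑ v ∈ T, z v * advec F v w
        = ∑ v ∈ T, ∑ i : Fin k,
            (z v * (if v ∈ (B i).1 then (1 : ZMod 2) else 0)
              * (if w ∈ (B i).2 then 1 else 0)
            + z v * (if v ∈ (B i).2 then (1 : ZMod 2) else 0)
              * (if w ∈ (B i).1 then 1 else 0)) := by
          refine Finset.sum_congr rfl fun v _ => ?_
          rw [cover_identity hB v w, Finset.mul_sum]
          exact Finset.sum_congr rfl fun i _ => by ring
      _ = ∑ i : Fin k, ∑ v ∈ T,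
            (z v * (if v ∈ (B i).1 then (1 : ZMod 2) else 0)
              * (if w ∈ (B i).2 then 1 else 0)
            + z v * (if v ∈ (B i).2 then (1 : ZMod 2) else 0)
              * (if w ∈ (B i).1 then 1 else 0)) := Finset.sum_comm
      _ = ∑ i : Fin k,
            ((∑ v ∈ T, z v * (if v ∈ (B i).1 then (1 : ZMod 2) else 0))
              * (if w ∈ (B i).2 then 1 else 0)
            + (∑ v ∈ T, z v * (if v ∈ (B i).2 then (1 : ZMod 2) else 0))
              * (if w ∈ (B i).1 then 1 else 0)) := by
          refine Finset.sum_congr rfl fun i _ => ?_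
          rw [Finset.sum_add_distrib, Finset.sum_mul, Finset.sum_mul]
      _ = 0 := by
          refine Finset.sum_eq_zero fun i _ => ?_
          rw [horth1 i, horth2 i, zero_mul, zero_mul, add_zero]
  exact hznz (nd F hF T.card T rfl ⟨M, hM, hTcoe.symm⟩ z hsupp hsums ↑x)


section MMS
variable {V : Type*} [Fintype V] (F : SimpleGraph V)

lemma mset_zero : 0 ∈ {n : ℕ | ∃ M : F.Subgraph, M.IsMatching ∧ M.edgeSet.ncard = n} :=
  ⟨⊥, fun v hv => absurd hv (by simp), by simp⟩

lemma mset_bdd : BddAbove {n : ℕ | ∃ M : F.Subgraph, M.IsMatching ∧ M.edgeSet.ncard = n} := by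
  refine ⟨Fintype.card (Sym2 V), ?_⟩
  rintro n ⟨M, -, rfl⟩
  calc M.edgeSet.ncard ≤ (Set.univ : Set (Sym2 V)).ncard :=
        Set.ncard_le_ncard (Set.subset_univ _) Set.finite_univ
    _ = Fintype.card (Sym2 V) := by rw [Set.ncard_univ, Nat.card_eq_fintype_card]

variable {F}

lemma le_mms {n : ℕ} (h : ∃ M : F.Subgraph, M.IsMatching ∧ M.edgeSet.ncard = n) :
    n ≤ maxMatchingSize F := le_csSup (mset_bdd F) h

lemma mms_le {c : ℕ} (h : ∀ n, (∃ M : F.Subgraph, M.IsMatching ∧ M.edgeSet.ncard = n) → n ≤ c) :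
    maxMatchingSize F ≤ c := csSup_le ⟨0, mset_zero F⟩ (fun n hn => h n hn)

lemma mms_mem : ∃ M : F.Subgraph, M.IsMatching ∧ M.edgeSet.ncard = maxMatchingSize F :=
  Nat.sSup_mem ⟨0, mset_zero F⟩ (mset_bdd F)

end MMS

lemma upper_bound {V : Type*} [Fintype V] :
    ∀ (n : ℕ) (F : SimpleGraph V), F.IsAcyclic → F.edgeSet.ncard = n →
    ∃ B : Fin (maxMatchingSize F) → Finset V × Finset V, IsOddCover F B := by
  intro n
  induction n using Nat.strong_induction_on with
  | _ n ih =>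
    intro F hF hn
    by_cases hE : ∃ a b, F.Adj a b
    case neg =>
      have hν : maxMatchingSize F = 0 := by
        refine le_antisymm (mms_le fun n ⟨M, hM, hcn⟩ => ?_) (Nat.zero_le _)
        have : M.edgeSet = ∅ := by
          ext e
          induction e with
          | _ x y =>
            simp only [Subgraph.mem_edgeSet, Set.mem_empty_iff_false, iff_false]
            exact fun h => hE ⟨x, y, M.adj_sub h⟩
        simp [← hcn, this]
      rw [hν]
      refine ⟨Fin.elim0, fun i => i.elim0, fun u v huv => ?_⟩
      refine iff_of_false (fun h => hE ⟨u, v, h⟩) ?_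
      simp
    case pos =>
      obtain ⟨a, b, hab⟩ := hE
      obtain ⟨u, v, huv, hleaf⟩ := exists_leaf F hF hab
      set F' : SimpleGraph V := {
        Adj := fun x y => F.Adj x y ∧ x ≠ v ∧ y ≠ v
        symm := ⟨fun x y ⟨h1, h2, h3⟩ => ⟨h1.symm, h3, h2⟩⟩
        loopless := ⟨fun x h => F.irrefl h.1⟩ } with hF'def
      have hle : F' ≤ F := fun x y h => h.1
      have hF'ac : F'.IsAcyclic := fun w c hc => hF (c.mapLe hle) (hc.mapLe hle)
      have hss : F'.edgeSet ⊂ F.edgeSet := by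
        refine ⟨SimpleGraph.edgeSet_mono hle, fun hsub => ?_⟩
        have : s(u, v) ∈ F.edgeSet := huv
        have h2 := hsub this
        rw [SimpleGraph.mem_edgeSet] at h2
        exact h2.2.2 rfl
      have hlt : F'.edgeSet.ncard < n := by
        rw [← hn]
        exact Set.ncard_lt_ncard hss (Set.toFinite _)
      obtain ⟨B', hB'⟩ := ih _ hlt F' hF'ac rfl
      -- no F'-edges at u and v
      have hu' : ∀ y, ¬ F'.Adj u y := by
        rintro y ⟨h1, -, h3⟩
        exact h3 (hleaf y h1)
      have hv' : ∀ y, ¬ F'.Adj v y := by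
        rintro y ⟨-, h2, -⟩
        exact h2 rfl
      -- b-direction: maxMatchingSize F' + 1 ≤ maxMatchingSize F
      obtain ⟨M', hM', hM'card⟩ := mms_mem (F := F')
      have huM' : u ∉ M'.verts := by
        intro h
        obtain ⟨y, hy, -⟩ := hM' h
        exact hu' y (M'.adj_sub hy)
      have hvM' : v ∉ M'.verts := by
        intro h
        obtain ⟨y, hy, -⟩ := hM' h
        exact hv' y (M'.adj_sub hy)
      set M'' : F.Subgraph := {
        verts := M'.verts
        Adj := M'.Adj
        adj_sub := fun h => hle (M'.adj_sub h)
        edge_vert := fun h => M'.edge_vert h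
        symm := M'.symm } with hM''def
      have hM''m : M''.IsMatching := hM'
      have hM''edge : M''.edgeSet = M'.edgeSet := rfl
      have hdisj : Disjoint M''.support (F.subgraphOfAdj huv).support := by
        rw [hM''m.support_eq_verts, (Subgraph.IsMatching.subgraphOfAdj huv).support_eq_verts,
          SimpleGraph.subgraphOfAdj_verts]
        rw [Set.disjoint_right]
        rintro x (rfl | rfl)
        exacts [huM', hvM']
      have hMm : (M'' ⊔ F.subgraphOfAdj huv).IsMatching :=
        hM''m.sup (Subgraph.IsMatching.subgraphOfAdj huv) hdisj
      have hnotmem : s(u, v) ∉ M''.edgeSet := by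
        intro h
        rw [Subgraph.mem_edgeSet] at h
        exact huM' (M'.edge_vert h)
      have hMcard : (M'' ⊔ F.subgraphOfAdj huv).edgeSet.ncard = maxMatchingSize F' + 1 := by
        rw [Subgraph.edgeSet_sup, SimpleGraph.edgeSet_subgraphOfAdj, Set.union_singleton,
          Set.ncard_insert_of_notMem (hM''edge ▸ hnotmem) (Set.toFinite _), hM''edge, hM'card]
      have hb : maxMatchingSize F' + 1 ≤ maxMatchingSize F :=
        le_mms ⟨_, hMm, hMcard⟩
      -- a-direction: maxMatchingSize F ≤ maxMatchingSize F' + 1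
      have ha : maxMatchingSize F ≤ maxMatchingSize F' + 1 := by
        refine mms_le fun m ⟨M, hM, hm⟩ => ?_
        by_cases hvM : v ∈ M.verts
        · obtain ⟨w, hw, -⟩ := hM hvM
          obtain ⟨hDm, hDv, hDe⟩ := matching_delete hM hw
          set M₂ : F'.Subgraph := {
            verts := (M.deleteVerts {v, w}).verts
            Adj := (M.deleteVerts {v, w}).Adj
            adj_sub := by
              intro x y h
              obtain ⟨hx1, hx2, hy1, hy2, hadj⟩ := Subgraph.deleteVerts_adj.mp h
              exact ⟨M.adj_sub hadj, fun hh => hx2 (by simp [hh]), fun hh => hy2 (by simp [hh])⟩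
            edge_vert := fun h => (M.deleteVerts {v, w}).edge_vert h
            symm := (M.deleteVerts {v, w}).symm } with hM₂def
          have hM₂m : M₂.IsMatching := hDm
          have hM₂e : M₂.edgeSet = (M.deleteVerts {v, w}).edgeSet := rfl
          have hmem : s(v, w) ∈ M.edgeSet := hw
          have h1 : 1 ≤ m := by
            rw [← hm]
            exact (Set.ncard_pos (Set.toFinite _)).mpr ⟨_, hmem⟩
          have hM₂card : M₂.edgeSet.ncard = m - 1 := by
            rw [hM₂e, hDe, Set.ncard_diff_singleton_of_mem hmem, hm]
          have := le_mms ⟨M₂, hM₂m, hM₂card⟩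
          omega
        · set M₂ : F'.Subgraph := {
            verts := M.verts
            Adj := M.Adj
            adj_sub := by
              intro x y h
              refine ⟨M.adj_sub h, ?_, ?_⟩
              · rintro rfl; exact hvM (M.edge_vert h)
              · rintro rfl; exact hvM (M.edge_vert h.symm)
            edge_vert := fun h => M.edge_vert h
            symm := M.symm } with hM₂def
          have hM₂m : M₂.IsMatching := hM
          have hM₂e : M₂.edgeSet = M.edgeSet := rfl
          have := le_mms ⟨M₂, hM₂m, hM₂e ▸ hm⟩
          omega
      have hν : maxMatchingSize F = maxMatchingSize F' + 1 := le_antisymm ha hb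
      rw [hν]
      -- build the cover
      set Nv : Finset V := Finset.univ.filter (fun x => F.Adj v x) with hNv
      set hd : Finset V × Finset V := ({v}, Nv) with hhd
      set Bc : Fin (maxMatchingSize F' + 1) → Finset V × Finset V := Fin.cons hd B'
        with hBc
      refine ⟨Bc, ?_, ?_⟩
      · intro i
        refine Fin.cases ?_ (fun j => ?_) i
        · rw [hBc, Fin.cons_zero]
          simp only [hhd]
          rw [Finset.disjoint_singleton_left]
          simp [hNv]
        · rw [hBc, Fin.cons_succ]
          exact hB'.1 j
      · intro x y hxy
        have hsplit : (Finset.univ.filter (fun i : Fin (maxMatchingSize F' + 1) =>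
            (x ∈ (Bc i).1 ∧ y ∈ (Bc i).2) ∨ (x ∈ (Bc i).2 ∧ y ∈ (Bc i).1))).card
            = (if (x ∈ hd.1 ∧ y ∈ hd.2) ∨ (x ∈ hd.2 ∧ y ∈ hd.1) then 1 else 0)
              + (Finset.univ.filter (fun i : Fin (maxMatchingSize F') =>
                (x ∈ (B' i).1 ∧ y ∈ (B' i).2) ∨ (x ∈ (B' i).2 ∧ y ∈ (B' i).1))).card := by
          rw [Finset.card_filter, Finset.card_filter, Fin.sum_univ_succ]
          simp only [hBc, Fin.cons_zero, Fin.cons_succ]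
        rw [hsplit]
        have hB'xy := hB'.2 x y hxy
        have hmem1 : (x ∈ hd.1 ↔ x = v) := by simp [hhd]
        have hmem2 : (y ∈ hd.1 ↔ y = v) := by simp [hhd]
        have hmem3 : (x ∈ hd.2 ↔ F.Adj v x) := by simp [hhd, hNv]
        have hmem4 : (y ∈ hd.2 ↔ F.Adj v y) := by simp [hhd, hNv]
        rcases eq_or_ne x v with rfl | hxv
        · have hne : ¬ F'.Adj x y := hv' y
          have heven : ¬ Odd ((Finset.univ.filter (fun i : Fin (maxMatchingSize F') =>
              (x ∈ (B' i).1 ∧ y ∈ (B' i).2) ∨ (x ∈ (B' i).2 ∧ y ∈ (B' i).1))).card) :=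
            fun h => hne (hB'xy.mpr h)
          have hcond : ((x ∈ hd.1 ∧ y ∈ hd.2) ∨ (x ∈ hd.2 ∧ y ∈ hd.1)) ↔ F.Adj x y := by
            rw [hmem1, hmem4, hmem3, hmem2]
            constructor
            · rintro (⟨-, h⟩ | ⟨h, -⟩)
              · exact h
              · exact absurd h (F.irrefl)
            · exact fun h => Or.inl ⟨rfl, h⟩
          by_cases hadj : F.Adj x y
          · rw [if_pos (hcond.mpr hadj)]
            refine iff_of_true hadj ?_
            rw [add_comm, Nat.odd_add_one]
            exact heven
          · rw [if_neg (fun hc => hadj (hcond.mp hc)), zero_add]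
            exact iff_of_false hadj heven
        · rcases eq_or_ne y v with rfl | hyv
          · have hne : ¬ F'.Adj x y := fun h => (hv' x) h.symm
            have heven : ¬ Odd ((Finset.univ.filter (fun i : Fin (maxMatchingSize F') =>
                (x ∈ (B' i).1 ∧ y ∈ (B' i).2) ∨ (x ∈ (B' i).2 ∧ y ∈ (B' i).1))).card) :=
              fun h => hne (hB'xy.mpr h)
            have hcond : ((x ∈ hd.1 ∧ y ∈ hd.2) ∨ (x ∈ hd.2 ∧ y ∈ hd.1)) ↔ F.Adj x y := by
              rw [hmem1, hmem4, hmem3, hmem2]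
              constructor
              · rintro (⟨h, -⟩ | ⟨h, -⟩)
                · exact absurd (h ▸ hxv) (fun hh => hh rfl)
                · exact h.symm
              · exact fun h => Or.inr ⟨h.symm, rfl⟩
            by_cases hadj : F.Adj x y
            · rw [if_pos (hcond.mpr hadj)]
              refine iff_of_true hadj ?_
              rw [add_comm, Nat.odd_add_one]
              exact heven
            · rw [if_neg (fun hc => hadj (hcond.mp hc)), zero_add]
              exact iff_of_false hadj heven
          · have hcond : ¬ ((x ∈ hd.1 ∧ y ∈ hd.2) ∨ (x ∈ hd.2 ∧ y ∈ hd.1)) := by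
              rw [hmem1, hmem4, hmem3, hmem2]
              rintro (⟨h, -⟩ | ⟨-, h⟩)
              exacts [hxv h, hyv h]
            rw [if_neg hcond, zero_add, ← hB'xy]
            constructor
            · exact fun h => ⟨h, hxv, hyv⟩
            · exact fun h => h.1


theorem stmt7 {V : Type*} [Fintype V] (F : SimpleGraph V) (hF : F.IsAcyclic) :
    b2 F = maxMatchingSize F := by
  classical
  obtain ⟨Bu, hBu⟩ := upper_bound (F.edgeSet.ncard) F hF rfl
  have hmemU : maxMatchingSize F ∈
      {k : ℕ | ∃ B : Fin k → Finset V × Finset V, IsOddCover F B} := ⟨Bu, hBu⟩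
  have hub : b2 F ≤ maxMatchingSize F := Nat.sInf_le hmemU
  have hmem : b2 F ∈ {k : ℕ | ∃ B : Fin k → Finset V × Finset V, IsOddCover F B} :=
    Nat.sInf_mem ⟨_, hmemU⟩
  obtain ⟨B, hB⟩ := hmem
  have hlb : maxMatchingSize F ≤ b2 F := mms_le fun n hn => by
    obtain ⟨M, hM, hn⟩ := hn
    exact hn ▸ lower_bound hF hB hM
  exact le_antisymm hub hlb
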